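/- Let R be a commutative local ring with maximal ideal m, and set m^∞ := ⋂_{N ≥ 1} m^N (an ideal of R). Let M be an R-module and M' ⊆ M a submodule. If the quotient ring R/m^∞ is Noetherian and the R-module M/(m^∞ M) is finitely generated, then m^∞ M + M' = ⋂_{N ≥ 0} (m^N M + M'). In particular this holds for M = R and M' any ideal of R. -/

import Mathlib

open IsLocalRing

universe u v

/-- Universe-polymorphic version of Krull's intersection theorem for Noetherian local rings
and finite modules (Mathlib's version requires the ring and module in the same universe). -/
theorem krull_aux {R : Type u} [CommRing R] [IsLocalRing R] [IsNoetherianRing R]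
    {M : Type v} [AddCommGroup M] [Module R M] [Module.Finite R M]
    {I : Ideal R} (h : I ≠ ⊤) :
    (⨅ i : ℕ, I ^ i • ⊤ : Submodule R M) = ⊥ := by
  let R' := ULift.{max u v} R
  let M' := ULift.{max u v} M
  let e : R ≃+* R' := (ULift.ringEquiv (R := R)).symm
  haveI : IsLocalRing R' := IsLocalRing.of_surjective' e.toRingHom e.surjective
  haveI : IsNoetherianRing R' := isNoetherianRing_of_ringEquiv R e
  haveI : IsScalarTower R R' M' :=
    ⟨fun r x m => ULift.down_injective (mul_smul r x.down m.down)⟩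
  haveI : Module.Finite R M' := Module.Finite.equiv (ULift.moduleEquiv (R := R) (M := M)).symm
  haveI : Module.Finite R' M' := Module.Finite.of_restrictScalars_finite R R' M'
  let f : R →+* R' := e.toRingHom
  let J : Ideal R' := I.map f
  have hJ : J ≠ ⊤ := by
    intro hJ
    obtain ⟨x, hx, hfx⟩ := Ideal.mem_map_iff_of_surjective f e.surjective |>.mp
      ((Ideal.eq_top_iff_one J).mp hJ)
    have : x = 1 := by exact congrArg ULift.down hfx
    exact h ((Ideal.eq_top_iff_one I).mpr (this ▸ hx))
  have hbot : (⨅ i : ℕ, J ^ i • ⊤ : Submodule R' M') = ⊥ :=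
    Ideal.iInf_pow_smul_eq_bot_of_isLocalRing J hJ
  rw [eq_bot_iff]
  intro x hx
  have key : (ULift.up x : M') ∈ (⨅ i : ℕ, J ^ i • ⊤ : Submodule R' M') := by
    rw [Submodule.mem_iInf]
    intro i
    have hxi := (Submodule.mem_iInf _).mp hx i
    refine Submodule.smul_induction_on hxi (fun r hr q _ => ?_) (fun a b ha hb => ?_)
    · have h1 : (ULift.up (r • q) : M') = (ULift.up r : R') • (ULift.up q : M') := rfl
      rw [h1]
      refine Submodule.smul_mem_smul ?_ Submodule.mem_top
      rw [show (J ^ i) = Ideal.map f (I ^ i) from (Ideal.map_pow f I i).symm]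
      exact Ideal.mem_map_of_mem f hr
    · rw [show (ULift.up (a + b) : M') = ULift.up a + ULift.up b from rfl]
      exact add_mem ha hb
  rw [hbot] at key
  simpa using congrArg ULift.down key

/-- Krull's theorem: let `R` be a commutative local ring with maximal ideal `m` and
`m^∞ = ⋂_{N ≥ 1} m^N`. If `R/m^∞` is Noetherian and `M/(m^∞ M)` is a finitely generated
`R`-module, then for any submodule `M' ⊆ M` one has
`m^∞ M + M' = ⋂_{N ≥ 0} (m^N M + M')`. -/
theorem krull_theorem {R : Type*} [CommRing R] [IsLocalRing R]
    {M : Type*} [AddCommGroup M] [Module R M] (M' : Submodule R M)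
    (hNoeth : IsNoetherianRing
      (R ⧸ (⨅ N : ℕ, (maximalIdeal R) ^ (N + 1))))
    (hFG : Module.Finite R
      (M ⧸ ((⨅ N : ℕ, (maximalIdeal R) ^ (N + 1)) • (⊤ : Submodule R M)))) :
    (⨅ N : ℕ, (maximalIdeal R) ^ (N + 1)) • (⊤ : Submodule R M) ⊔ M' =
      ⨅ N : ℕ, ((maximalIdeal R) ^ N • (⊤ : Submodule R M) ⊔ M') := by
  set m : Ideal R := maximalIdeal R with hm
  set I : Ideal R := ⨅ N : ℕ, m ^ (N + 1) with hIdef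
  set K : Submodule R M := I • ⊤ ⊔ M' with hKdef
  have hIm : I ≤ m := (iInf_le _ 0).trans (by rw [pow_one])
  have hIne : I ≠ ⊤ := fun h => (maximalIdeal.isMaximal R).ne_top (top_le_iff.mp (h ▸ hIm))
  haveI : Nontrivial (R ⧸ I) := Ideal.Quotient.nontrivial_iff.mpr hIne
  haveI : IsLocalRing (R ⧸ I) :=
    IsLocalRing.of_surjective' (Ideal.Quotient.mk I) Ideal.Quotient.mk_surjective
  set Q := M ⧸ K with hQdef
  have hT : Module.IsTorsionBySet R Q (I : Set R) := by
    rw [Module.isTorsionBySet_quotient_iff]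
    intro x r hr
    exact Submodule.mem_sup_left (Submodule.smul_mem_smul hr Submodule.mem_top)
  letI : Module (R ⧸ I) Q := hT.module
  haveI : IsScalarTower R (R ⧸ I) Q := hT.isScalarTower
  -- finiteness of Q over R, then over R ⧸ I
  haveI : Module.Finite R Q := by
    refine Module.Finite.of_surjective
      (Submodule.mapQ (I • ⊤) K LinearMap.id le_sup_left) (fun x => ?_)
    obtain ⟨y, rfl⟩ := Submodule.Quotient.mk_surjective _ x
    exact ⟨Submodule.Quotient.mk y, rfl⟩
  haveI : Module.Finite (R ⧸ I) Q := Module.Finite.of_restrictScalars_finite R (R ⧸ I) Q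
  set mb : Ideal (R ⧸ I) := m.map (Ideal.Quotient.mk I) with hmb
  have hmbne : mb ≠ ⊤ := by
    intro h
    have := congrArg (Ideal.comap (Ideal.Quotient.mk I)) h
    rw [Ideal.comap_map_of_surjective _ Ideal.Quotient.mk_surjective, Ideal.comap_top,
      ← RingHom.ker_eq_comap_bot, Ideal.mk_ker, sup_eq_left.mpr hIm] at this
    exact (maximalIdeal.isMaximal R).ne_top this
  have hbot : (⨅ n : ℕ, mb ^ n • ⊤ : Submodule (R ⧸ I) Q) = ⊥ := krull_aux hmbne
  -- restrict scalars
  have hA : ∀ n : ℕ, ((mb ^ n • ⊤ : Submodule (R ⧸ I) Q).restrictScalars R)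
      = (m ^ n • ⊤ : Submodule R Q) := by
    intro n
    apply le_antisymm
    · intro x hx
      rw [Submodule.restrictScalars_mem] at hx
      refine Submodule.smul_induction_on hx (fun r hr q _ => ?_) (fun a b ha hb => add_mem ha hb)
      rw [hmb, ← Ideal.map_pow] at hr
      obtain ⟨a, ha, rfl⟩ := Ideal.mem_map_iff_of_surjective _ Ideal.Quotient.mk_surjective |>.mp hr
      rw [hT.mk_smul]
      exact Submodule.smul_mem_smul ha Submodule.mem_top
    · refine Submodule.smul_le.mpr (fun r hr q _ => ?_)
      rw [Submodule.restrictScalars_mem, ← hT.mk_smul]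
      refine Submodule.smul_mem_smul ?_ Submodule.mem_top
      rw [hmb, ← Ideal.map_pow]
      exact Ideal.mem_map_of_mem _ hr
  have hinf : (⨅ n : ℕ, m ^ n • ⊤ : Submodule R Q) = ⊥ := by
    apply le_bot_iff.mp
    intro x hx
    have hx' : x ∈ (⨅ n : ℕ, mb ^ n • ⊤ : Submodule (R ⧸ I) Q) := by
      rw [Submodule.mem_iInf]
      intro n
      have := (Submodule.mem_iInf _).mp hx n
      rw [← hA n, Submodule.restrictScalars_mem] at this
      exact this
    rw [hbot] at hx'
    exact hx'
  -- pull back along mkQ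
  have hB : ∀ n : ℕ, Submodule.comap K.mkQ (m ^ n • ⊤ : Submodule R Q) = m ^ n • ⊤ ⊔ K := by
    intro n
    have h1 : (m ^ n • ⊤ : Submodule R Q) = Submodule.map K.mkQ (m ^ n • ⊤) := by
      rw [Submodule.map_smul'', Submodule.map_top, Submodule.range_mkQ]
    rw [h1, Submodule.comap_map_eq, Submodule.ker_mkQ]
  have hKeq : (⨅ n : ℕ, (m ^ n • ⊤ ⊔ K : Submodule R M)) = K := by
    have h2 : (⨅ n : ℕ, (m ^ n • ⊤ ⊔ K : Submodule R M))
        = ⨅ n : ℕ, Submodule.comap K.mkQ (m ^ n • ⊤ : Submodule R Q) :=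
      iInf_congr fun n => (hB n).symm
    rw [h2, ← Submodule.comap_iInf, hinf, Submodule.comap_bot, Submodule.ker_mkQ]
  -- replace K by M' inside the infimum
  have hsup : ∀ n : ℕ, (m ^ (n + 1) • ⊤ ⊔ K : Submodule R M) = m ^ (n + 1) • ⊤ ⊔ M' := by
    intro n
    rw [hKdef, ← sup_assoc]
    congr 1
    exact sup_eq_left.mpr (Submodule.smul_mono_left (iInf_le _ n))
  rw [← hKeq]
  apply le_antisymm
  · refine le_iInf fun n => ?_
    refine (iInf_le _ (n + 1)).trans ?_
    rw [hsup n]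
    exact sup_le_sup_right
      (Submodule.smul_mono_left (Ideal.pow_le_pow_right (Nat.le_succ n))) _
  · refine le_iInf fun n => ?_
    exact (iInf_le _ n).trans (sup_le_sup_left le_sup_right _)
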